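/- If (x,y) lies in the interior of the medial triangle of T (i.e., v/2 - (v/u)x < y < v/2 and 0 < x < u/2), then setting w = (2uy + 2vx - uv)/(2vx) and t = (2uy + 2vx - uv)/(2uy), we have 0 < w < 1, 0 < t < 1, and x = (1/2)·tu/(w+(1-w)t), y = (1/2)·wv/(w+(1-w)t). -/

import Mathlib

theorem stmt_2 (u v x y : ℝ) (hu : 0 < u) (hv : 0 < v)
    (h1 : v / 2 - (v / u) * x < y) (h2 : y < v / 2) (h3 : 0 < x) (h4 : x < u / 2)
    (w t : ℝ) (hw : w = (2 * u * y + 2 * v * x - u * v) / (2 * v * x))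
    (ht : t = (2 * u * y + 2 * v * x - u * v) / (2 * u * y)) :
    0 < w ∧ w < 1 ∧ 0 < t ∧ t < 1 ∧
    x = (1/2) * (t * u) / (w + (1 - w) * t) ∧
    y = (1/2) * (w * v) / (w + (1 - w) * t) := by
  have hy : 0 < y := by
    have : v / 2 - (v / u) * x > v / 2 - (v / u) * (u / 2) := by
      have : (v / u) * x < (v / u) * (u / 2) := by
        apply mul_lt_mul_of_pos_left h4 (div_pos hv hu)
      linarith
    have h0 : v / 2 - (v / u) * (u / 2) = 0 := by field_simp; ring
    linarith
  have hN : 0 < 2 * u * y + 2 * v * x - u * v := by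
    have h1' := mul_lt_mul_of_pos_left h1 hu
    have : u * (v / u * x) = v * x := by field_simp
    nlinarith
  have hvx : 0 < 2 * v * x := by positivity
  have huy : 0 < 2 * u * y := by positivity
  have hw0 : 0 < w := hw ▸ div_pos hN hvx
  have hw1 : w < 1 := by
    rw [hw, div_lt_one hvx]; nlinarith
  have ht0 : 0 < t := ht ▸ div_pos hN huy
  have ht1 : t < 1 := by
    rw [ht, div_lt_one huy]; nlinarith
  have hden : w + (1 - w) * t = (2 * u * y + 2 * v * x - u * v) / (4 * x * y) := by
    rw [hw, ht]; field_simp; ring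
  refine ⟨hw0, hw1, ht0, ht1, ?_, ?_⟩
  · rw [hden, ht]
    rw [eq_div_iff (div_pos hN (by positivity)).ne']
    field_simp
    ring
  · rw [hden, hw]
    rw [eq_div_iff (div_pos hN (by positivity)).ne']
    field_simp
    ring
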